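/- arXiv:2509.02529 — 7 statements merged into one kernel-verified Lean document; each statement's English description precedes it below -/
import Mathlib

section
/- Let ρ : Matrix (Fin m) (Fin m) ℂ → Matrix (Fin d) (Fin d) ℂ be a ℂ-linear map satisfying ρ(X * Y) = ρ(X) * ρ(Y) for all X, Y. Then for all ℂ-linear maps Φ, Ψ : Matrix (Fin m) (Fin m) ℂ → Matrix (Fin n) (Fin n) ℂ, the Fourier transform of the convolution is the product of the Fourier transforms: ∑_{i,j} ρ(e_{ij}) ⊗ₖ (Φ * Ψ)(e_{ij}) = (∑_{i,j} ρ(e_{ij}) ⊗ₖ Φ(e_{ij})) * (∑_{i,j} ρ(e_{ij}) ⊗ₖ Ψ(e_{ij})). -/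
/-!
STATEMENT 4: For a ℂ-linear multiplicative map `ρ : Matrix (Fin m) (Fin m) ℂ →
Matrix (Fin d) (Fin d) ℂ` and ℂ-linear maps `Φ, Ψ : Matrix (Fin m) (Fin m) ℂ →
Matrix (Fin n) (Fin n) ℂ`, the Fourier transform of the convolution is the product of
the Fourier transforms:
`∑ i j, ρ(e_{ij}) ⊗ₖ (Φ * Ψ)(e_{ij}) = (∑ i j, ρ(e_{ij}) ⊗ₖ Φ(e_{ij})) * (∑ i j, ρ(e_{ij}) ⊗ₖ Ψ(e_{ij}))`.
-/

open scoped Kronecker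

namespace Stmt4

/-- The convolution of two linear maps `Φ Ψ`: the unique ℂ-linear map with
`(Φ * Ψ)(e_{ij}) = ∑ k, Φ(e_{ik}) * Ψ(e_{kj})`. -/
noncomputable def conv {m n : ℕ}
    (Φ Ψ : Matrix (Fin m) (Fin m) ℂ →ₗ[ℂ] Matrix (Fin n) (Fin n) ℂ) :
    Matrix (Fin m) (Fin m) ℂ →ₗ[ℂ] Matrix (Fin n) (Fin n) ℂ :=
  (Matrix.stdBasis ℂ (Fin m) (Fin m)).constr ℂ fun p =>
    ∑ k : Fin m, Φ (Matrix.single p.1 k 1) * Ψ (Matrix.single k p.2 1)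

lemma conv_apply {m n : ℕ}
    (Φ Ψ : Matrix (Fin m) (Fin m) ℂ →ₗ[ℂ] Matrix (Fin n) (Fin n) ℂ) (i j : Fin m) :
    conv Φ Ψ (Matrix.single i j 1) =
      ∑ k : Fin m, Φ (Matrix.single i k 1) * Ψ (Matrix.single k j 1) := by
  rw [← Matrix.stdBasis_eq_single]
  exact (Matrix.stdBasis ℂ (Fin m) (Fin m)).constr_basis ℂ _ (i, j)

lemma kron_sum {p q r s : ℕ} (A : Matrix (Fin p) (Fin q) ℂ) {ι : Type*} (t : Finset ι)
    (f : ι → Matrix (Fin r) (Fin s) ℂ) :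
    A ⊗ₖ (∑ x ∈ t, f x) = ∑ x ∈ t, A ⊗ₖ f x := by
  ext ⟨a, b⟩ ⟨c, e⟩
  simp [Matrix.kroneckerMap_apply, Matrix.sum_apply, Finset.mul_sum]

theorem fourier_conv_eq_mul_fourier {m n d : ℕ}
    (ρ : Matrix (Fin m) (Fin m) ℂ →ₗ[ℂ] Matrix (Fin d) (Fin d) ℂ)
    (hρ : ∀ X Y : Matrix (Fin m) (Fin m) ℂ, ρ (X * Y) = ρ X * ρ Y)
    (Φ Ψ : Matrix (Fin m) (Fin m) ℂ →ₗ[ℂ] Matrix (Fin n) (Fin n) ℂ) :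
    (∑ i : Fin m, ∑ j : Fin m,
        ρ (Matrix.single i j 1) ⊗ₖ conv Φ Ψ (Matrix.single i j 1)) =
      (∑ i : Fin m, ∑ j : Fin m,
          ρ (Matrix.single i j 1) ⊗ₖ Φ (Matrix.single i j 1)) *
        (∑ i : Fin m, ∑ j : Fin m,
          ρ (Matrix.single i j 1) ⊗ₖ Ψ (Matrix.single i j 1)) := by
  rw [Finset.sum_mul]
  refine Finset.sum_congr rfl fun i _ => ?_
  rw [Finset.sum_mul]
  calc ∑ l : Fin m, ρ (Matrix.single i l 1) ⊗ₖ conv Φ Ψ (Matrix.single i l 1)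
      = ∑ l : Fin m, ∑ j : Fin m,
          ρ (Matrix.single i l 1) ⊗ₖ
            (Φ (Matrix.single i j 1) * Ψ (Matrix.single j l 1)) := by
        simp [conv_apply, kron_sum]
    _ = ∑ j : Fin m, ∑ l : Fin m,
          ρ (Matrix.single i l 1) ⊗ₖ
            (Φ (Matrix.single i j 1) * Ψ (Matrix.single j l 1)) :=
        Finset.sum_comm
    _ = _ := by
        refine Finset.sum_congr rfl fun j _ => ?_
        symm
        rw [Finset.mul_sum, Finset.sum_eq_single j]
        · rw [Finset.mul_sum]
          refine Finset.sum_congr rfl fun l _ => ?_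
          rw [← Matrix.mul_kronecker_mul, ← hρ, Matrix.single_mul_single_same, one_mul]
        · intro k _ hkj
          rw [Finset.mul_sum]
          refine Finset.sum_eq_zero fun l _ => ?_
          rw [← Matrix.mul_kronecker_mul, ← hρ,
            Matrix.single_mul_single_of_ne (h := Ne.symm hkj), map_zero,
            Matrix.zero_kronecker]
        · intro h; exact absurd (Finset.mem_univ j) h

end Stmt4
end

section
/- Let G be a finite group and (ρ_i)_{i ∈ I} a complete family of unitary matrix representations ρ_i : G → Matrix (Fin (d i)) (Fin (d i)) ℂ. Then for every function Φ : G → Matrix (Fin n) (Fin n) ℂ and every g ∈ G, the Fourier inversion formula holds: Φ(g) = (1 / |G|) • ∑_{i ∈ I} (d i : ℂ) • tr₁[(ρ_i(g⁻¹) ⊗ₖ 1) * Φ̂(ρ_i)]. -/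
/-!
STATEMENT 5: Fourier inversion formula for matrix-valued maps on a finite group: for a
complete family `(ρ_i)_{i ∈ I}` of unitary matrix representations of a finite group `G`
and any `Φ : G → Matrix (Fin n) (Fin n) ℂ`,
`Φ(g) = (1 / |G|) • ∑ i, (d i : ℂ) • tr₁[(ρ_i(g⁻¹) ⊗ₖ 1) * Φ̂(ρ_i)]`.
-/

open scoped Kronecker Matrix

namespace Stmt5

/-- Partial trace over the first tensor factor:
`(tr₁ M)(a,b) = ∑ x, M ((x,a),(x,b))`. -/
noncomputable def ptrace {d n : ℕ} (M : Matrix (Fin d × Fin n) (Fin d × Fin n) ℂ) :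
    Matrix (Fin n) (Fin n) ℂ :=
  Matrix.of fun a b => ∑ x : Fin d, M (x, a) (x, b)

/-- The Fourier transform `Φ̂(ρ) = ∑ g, ρ g ⊗ₖ Φ g`. -/
noncomputable def fourier {G : Type*} [Fintype G] {d n : ℕ}
    (ρ : G → Matrix (Fin d) (Fin d) ℂ) (Φ : G → Matrix (Fin n) (Fin n) ℂ) :
    Matrix (Fin d × Fin n) (Fin d × Fin n) ℂ :=
  ∑ g : G, ρ g ⊗ₖ Φ g

lemma stdBasis_repr' {m n : ℕ} (X : Matrix (Fin m) (Fin n) ℂ) (p : Fin m × Fin n) :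
    (Matrix.stdBasis ℂ (Fin m) (Fin n)).repr X p = X p.1 p.2 := by
  classical
  nth_rewrite 1 [Matrix.matrix_eq_sum_single X]
  have h : ∀ (i : Fin m) (j : Fin n) (c : ℂ),
      Matrix.single i j c = c • Matrix.stdBasis ℂ (Fin m) (Fin n) (i, j) := by
    intro i j c
    rw [Matrix.stdBasis_eq_single, Matrix.smul_single, smul_eq_mul, mul_one]
  simp_rw [h, map_sum, map_smul, Module.Basis.repr_self]
  obtain ⟨a, b⟩ := p
  simp [Finsupp.single_apply, Prod.ext_iff, ite_and]

lemma trace_mulLeft_pi {I : Type*} [Fintype I] (d : I → ℕ)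
    (M : ∀ i, Matrix (Fin (d i)) (Fin (d i)) ℂ) :
    LinearMap.trace ℂ _ (LinearMap.mulLeft ℂ M) = ∑ i, (d i : ℂ) * (M i).trace := by
  classical
  let b := Pi.basis (fun i => Matrix.stdBasis ℂ (Fin (d i)) (Fin (d i)))
  rw [LinearMap.trace_eq_matrix_trace ℂ b, Matrix.trace]
  have hdiag : ∀ j : Σ i, Fin (d i) × Fin (d i),
      (LinearMap.toMatrix b b (LinearMap.mulLeft ℂ M)) j j = M j.1 j.2.1 j.2.1 := by
    rintro ⟨i, a, c⟩
    rw [LinearMap.toMatrix_apply, Pi.basis_repr]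
    have hb : b ⟨i, (a, c)⟩ = Pi.single i (Matrix.stdBasis ℂ (Fin (d i)) (Fin (d i)) (a, c)) :=
      Pi.basis_apply _ _
    rw [hb]
    have : (LinearMap.mulLeft ℂ M (Pi.single i (Matrix.stdBasis ℂ (Fin (d i)) (Fin (d i)) (a, c)))) i
        = M i * Matrix.single a c 1 := by
      simp [LinearMap.mulLeft_apply, Matrix.stdBasis_eq_single]
    rw [this, stdBasis_repr']
    simp
  simp_rw [Matrix.diag_apply, hdiag]
  rw [← Finset.univ_sigma_univ, Finset.sum_sigma]
  refine Finset.sum_congr rfl fun i _ => ?_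
  simp [Fintype.sum_prod_type, Matrix.trace, Matrix.diag, Finset.sum_const, mul_comm,
    Finset.mul_sum]

open scoped Classical in
lemma trace_mulLeft_ma {G : Type*} [Group G] [Fintype G] (k : G) :
    LinearMap.trace ℂ (MonoidAlgebra ℂ G) (LinearMap.mulLeft ℂ (MonoidAlgebra.of ℂ G k))
      = if k = 1 then (Fintype.card G : ℂ) else 0 := by
  classical
  let b : Module.Basis G ℂ (MonoidAlgebra ℂ G) := MonoidAlgebra.basis G ℂ
  rw [LinearMap.trace_eq_matrix_trace ℂ b, Matrix.trace]
  have hdiag : ∀ j : G, (LinearMap.toMatrix b b (LinearMap.mulLeft ℂ (MonoidAlgebra.of ℂ G k))) j j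
      = if k = 1 then 1 else 0 := by
    intro j
    rw [LinearMap.toMatrix_apply]
    have hb : b j = MonoidAlgebra.single j 1 := rfl
    rw [hb]
    have : LinearMap.mulLeft ℂ (MonoidAlgebra.of ℂ G k) (MonoidAlgebra.single j (1:ℂ))
        = MonoidAlgebra.single (k * j) 1 := by
      simp [LinearMap.mulLeft_apply, MonoidAlgebra.of_apply, MonoidAlgebra.single_mul_single]
    rw [this]
    show (Finsupp.single (k*j) (1:ℂ)) j = _
    rw [Finsupp.single_apply]
    simp [mul_eq_right]
  simp_rw [Matrix.diag_apply, hdiag]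
  simp [Finset.sum_const]

lemma trace_mulLeft_conj {A B : Type*} [Ring A] [Ring B] [Algebra ℂ A] [Algebra ℂ B]
    [Module.Finite ℂ A] [Module.Free ℂ A] (e : A ≃ₐ[ℂ] B) (a : A) :
    LinearMap.trace ℂ B (LinearMap.mulLeft ℂ (e a)) = LinearMap.trace ℂ A (LinearMap.mulLeft ℂ a) := by
  rw [← LinearMap.trace_conj' (LinearMap.mulLeft ℂ a) e.toLinearEquiv]
  congr 1
  ext x
  simp [LinearEquiv.conj_apply, LinearMap.mulLeft_apply, map_mul]

theorem fourier_inversion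
    {G : Type*} [Group G] [Fintype G] {I : Type*} [Fintype I]
    (d : I → ℕ) (ρ : ∀ i, G → Matrix (Fin (d i)) (Fin (d i)) ℂ)
    (hmul : ∀ i (g h : G), ρ i (g * h) = ρ i g * ρ i h)
    (hone : ∀ i, ρ i 1 = 1)
    (hstar : ∀ i (g : G), (ρ i g)ᴴ = ρ i g⁻¹)
    (hcomplete : Function.Bijective
      ((MonoidAlgebra.lift ℂ (∀ i, Matrix (Fin (d i)) (Fin (d i)) ℂ) G)
        { toFun := fun g i => ρ i g
          map_one' := funext fun i => hone i
          map_mul' := fun g h => funext fun i => hmul i g h }))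
    {n : ℕ} (Φ : G → Matrix (Fin n) (Fin n) ℂ) (g : G) :
    Φ g = (1 / (Fintype.card G : ℂ)) •
      ∑ i : I, (d i : ℂ) •
        ptrace ((ρ i g⁻¹ ⊗ₖ (1 : Matrix (Fin n) (Fin n) ℂ)) * fourier (ρ i) Φ) := by
  classical
  haveI : Module.Finite ℂ (MonoidAlgebra ℂ G) := Module.Finite.of_basis
    (MonoidAlgebra.basis G ℂ : Module.Basis G ℂ (MonoidAlgebra ℂ G))
  set F : G →* (∀ i, Matrix (Fin (d i)) (Fin (d i)) ℂ) :=
    { toFun := fun g i => ρ i g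
      map_one' := funext fun i => hone i
      map_mul' := fun g h => funext fun i => hmul i g h } with hF
  let e : MonoidAlgebra ℂ G ≃ₐ[ℂ] (∀ i, Matrix (Fin (d i)) (Fin (d i)) ℂ) :=
    AlgEquiv.ofBijective _ hcomplete
  have hkey : ∀ k : G, ∑ i : I, (d i : ℂ) * (ρ i k).trace
      = if k = 1 then (Fintype.card G : ℂ) else 0 := by
    intro k
    have h1 := trace_mulLeft_conj e (MonoidAlgebra.of ℂ G k)
    have h2 : e (MonoidAlgebra.of ℂ G k) = fun i => ρ i k := by
      show (MonoidAlgebra.lift ℂ _ G F) (MonoidAlgebra.of ℂ G k) = _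
      rw [MonoidAlgebra.lift_of]
      rfl
    rw [h2, trace_mulLeft_pi d (fun i => ρ i k), trace_mulLeft_ma] at h1
    simpa using h1
  -- compute the partial trace
  have hpt : ∀ i, ptrace ((ρ i g⁻¹ ⊗ₖ (1 : Matrix (Fin n) (Fin n) ℂ)) * fourier (ρ i) Φ)
      = ∑ h : G, (ρ i (g⁻¹ * h)).trace • Φ h := by
    intro i
    ext a b
    simp only [ptrace, fourier, Finset.mul_sum, Matrix.sum_apply, Matrix.of_apply,
      Matrix.smul_apply]
    rw [Finset.sum_comm]
    refine Finset.sum_congr rfl fun h _ => ?_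
    rw [← Matrix.mul_kronecker_mul, ← hmul, Matrix.one_mul]
    simp [Matrix.kroneckerMap_apply, Matrix.trace, Matrix.diag, Finset.sum_mul, smul_eq_mul]
  simp_rw [hpt]
  have : ∑ i : I, (d i : ℂ) • ∑ h : G, (ρ i (g⁻¹ * h)).trace • Φ h
      = (Fintype.card G : ℂ) • Φ g := by
    simp_rw [Finset.smul_sum, smul_smul]
    rw [Finset.sum_comm]
    simp_rw [← Finset.sum_smul, hkey, inv_mul_eq_one, ite_smul, zero_smul]
    simp
  rw [this, smul_smul]
  rw [one_div, inv_mul_cancel₀, one_smul]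
  exact Nat.cast_ne_zero.mpr Fintype.card_pos.ne'
end Stmt5
end

section
/- Let G be a finite group and (ρ_i)_{i ∈ I} a complete family of unitary matrix representations ρ_i : G → Matrix (Fin (d i)) (Fin (d i)) ℂ. Then for all functions Φ, Ψ : G → Matrix (Fin n) (Fin n) ℂ, the Plancherel formula holds: ∑_{g ∈ G} Φ(g⁻¹) * Ψ(g) = (1 / |G|) • ∑_{i ∈ I} (d i : ℂ) • tr₁[Φ̂(ρ_i) * Ψ̂(ρ_i)]. -/
/-!
STATEMENT 7: Plancherel formula for matrix-valued maps on a finite group: for a complete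
family `(ρ_i)_{i ∈ I}` of unitary matrix representations of a finite group `G` and any
`Φ, Ψ : G → Matrix (Fin n) (Fin n) ℂ`,
`∑ g, Φ(g⁻¹) * Ψ(g) = (1 / |G|) • ∑ i, (d i : ℂ) • tr₁[Φ̂(ρ_i) * Ψ̂(ρ_i)]`.
-/

open scoped Kronecker Matrix

namespace Stmt7

lemma matrix_stdBasis_repr {m n : Type*} [Fintype m] [Fintype n] [DecidableEq m] [DecidableEq n]
    (M : Matrix m n ℂ) (i : m) (j : n) :
    (Matrix.stdBasis ℂ m n).repr M (i, j) = M i j := by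
  simp [Matrix.stdBasis, Module.Basis.map_repr, Module.Basis.repr_reindex_apply, Pi.basis_repr]

lemma trace_mulLeft_pi {I : Type*} [Fintype I] [DecidableEq I] (d : I → ℕ)
    (x : ∀ i, Matrix (Fin (d i)) (Fin (d i)) ℂ) :
    LinearMap.trace ℂ _ (LinearMap.mulLeft ℂ x) = ∑ i, (d i : ℂ) * (x i).trace := by
  classical
  rw [LinearMap.trace_eq_matrix_trace ℂ
    (Pi.basis fun i => Matrix.stdBasis ℂ (Fin (d i)) (Fin (d i)))]
  rw [Matrix.trace, ← Finset.univ_sigma_univ, Finset.sum_sigma]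
  refine Finset.sum_congr rfl fun i _ => ?_
  rw [Fintype.sum_prod_type]
  have : ∀ (a c : Fin (d i)),
      Matrix.diag (LinearMap.toMatrix (Pi.basis fun i => Matrix.stdBasis ℂ (Fin (d i)) (Fin (d i)))
        (Pi.basis fun i => Matrix.stdBasis ℂ (Fin (d i)) (Fin (d i))) (LinearMap.mulLeft ℂ x))
        ⟨i, (a, c)⟩ = x i a a := by
    intro a c
    rw [Matrix.diag_apply, LinearMap.toMatrix_apply, Pi.basis_apply, LinearMap.mulLeft_apply,
        ← Pi.single_mul_right, Pi.basis_repr, Pi.single_eq_same, matrix_stdBasis_repr,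
        Matrix.stdBasis_eq_single, Matrix.mul_apply]
    simp [Matrix.single]
  simp only [this]
  rw [Matrix.trace, Finset.mul_sum]
  simp [Finset.sum_const, mul_comm]

lemma trace_mulLeft_single {G : Type*} [Group G] [Fintype G] [DecidableEq G] (k : G) :
    LinearMap.trace ℂ (MonoidAlgebra ℂ G)
      (LinearMap.mulLeft ℂ (MonoidAlgebra.single k (1 : ℂ)))
      = if k = 1 then (Fintype.card G : ℂ) else 0 := by
  let b : Module.Basis G ℂ (MonoidAlgebra ℂ G) := MonoidAlgebra.basis G ℂ
  rw [LinearMap.trace_eq_matrix_trace ℂ b]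
  rw [Matrix.trace]
  have : ∀ g : G, Matrix.diag (LinearMap.toMatrix b b
      (LinearMap.mulLeft ℂ (MonoidAlgebra.single k (1:ℂ)))) g = if k = 1 then (1:ℂ) else 0 := by
    intro g
    rw [Matrix.diag_apply, LinearMap.toMatrix_apply, LinearMap.mulLeft_apply]
    have hb : b g = MonoidAlgebra.single g 1 := rfl
    rw [hb, MonoidAlgebra.single_mul_single, one_mul]
    have : (b.repr (MonoidAlgebra.single (k * g) (1:ℂ))) g = (Finsupp.single (k*g) (1:ℂ)) g := rfl
    rw [this, Finsupp.single_apply]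
    simp [mul_eq_right]
  simp only [this]
  simp [Finset.sum_const]


/-- Partial trace over the first tensor factor:
`(tr₁ M)(a,b) = ∑ x, M ((x,a),(x,b))`. -/
noncomputable def ptrace {d n : ℕ} (M : Matrix (Fin d × Fin n) (Fin d × Fin n) ℂ) :
    Matrix (Fin n) (Fin n) ℂ :=
  Matrix.of fun a b => ∑ x : Fin d, M (x, a) (x, b)

/-- The Fourier transform `Φ̂(ρ) = ∑ g, ρ g ⊗ₖ Φ g`. -/
noncomputable def fourier {G : Type*} [Fintype G] {d n : ℕ}
    (ρ : G → Matrix (Fin d) (Fin d) ℂ) (Φ : G → Matrix (Fin n) (Fin n) ℂ) :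
    Matrix (Fin d × Fin n) (Fin d × Fin n) ℂ :=
  ∑ g : G, ρ g ⊗ₖ Φ g

lemma ptrace_sum {d n : ℕ} {α : Type*} (s : Finset α)
    (f : α → Matrix (Fin d × Fin n) (Fin d × Fin n) ℂ) :
    ptrace (∑ x ∈ s, f x) = ∑ x ∈ s, ptrace (f x) := by
  ext a b
  simp only [ptrace, Matrix.of_apply, Matrix.sum_apply]
  rw [Finset.sum_comm]

lemma ptrace_kron {d n : ℕ} (A : Matrix (Fin d) (Fin d) ℂ) (B : Matrix (Fin n) (Fin n) ℂ) :
    ptrace (A ⊗ₖ B) = A.trace • B := by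
  ext a b
  simp [ptrace, Matrix.trace, Finset.sum_mul]

theorem plancherel
    {G : Type*} [Group G] [Fintype G] {I : Type*} [Fintype I]
    (d : I → ℕ) (ρ : ∀ i, G → Matrix (Fin (d i)) (Fin (d i)) ℂ)
    (hmul : ∀ i (g h : G), ρ i (g * h) = ρ i g * ρ i h)
    (hone : ∀ i, ρ i 1 = 1)
    (hstar : ∀ i (g : G), (ρ i g)ᴴ = ρ i g⁻¹)
    (hcomplete : Function.Bijective
      ((MonoidAlgebra.lift ℂ (∀ i, Matrix (Fin (d i)) (Fin (d i)) ℂ) G)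
        { toFun := fun g i => ρ i g
          map_one' := funext fun i => hone i
          map_mul' := fun g h => funext fun i => hmul i g h }))
    {n : ℕ} (Φ Ψ : G → Matrix (Fin n) (Fin n) ℂ) :
    ∑ g : G, Φ g⁻¹ * Ψ g = (1 / (Fintype.card G : ℂ)) •
      ∑ i : I, (d i : ℂ) • ptrace (fourier (ρ i) Φ * fourier (ρ i) Ψ) := by
  classical
  set F := ((MonoidAlgebra.lift ℂ (∀ i, Matrix (Fin (d i)) (Fin (d i)) ℂ) G)
        { toFun := fun g i => ρ i g
          map_one' := funext fun i => hone i
          map_mul' := fun g h => funext fun i => hmul i g h }) with hF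
  let e : MonoidAlgebra ℂ G ≃ₗ[ℂ] (∀ i, Matrix (Fin (d i)) (Fin (d i)) ℂ) :=
    LinearEquiv.ofBijective F.toLinearMap hcomplete
  have he : ∀ a, e a = F a := fun a => rfl
  have hconj : ∀ a : MonoidAlgebra ℂ G,
      LinearMap.mulLeft ℂ (F a) = e.conj (LinearMap.mulLeft ℂ a) := by
    intro a
    refine LinearMap.ext fun x => ?_
    rw [LinearEquiv.conj_apply, LinearMap.comp_apply, LinearMap.coe_comp, Function.comp_apply,
        LinearMap.mulLeft_apply, LinearMap.mulLeft_apply, LinearEquiv.coe_coe, he, map_mul]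
    congr 1
    exact (((he _).symm).trans (e.apply_symm_apply x)).symm
  have key : ∀ k : G, ∑ i, (d i : ℂ) * (ρ i k).trace
      = if k = 1 then (Fintype.card G : ℂ) else 0 := by
    intro k
    have h1 : F (MonoidAlgebra.single k 1) = fun i => ρ i k := by
      rw [hF, MonoidAlgebra.lift_single, one_smul]; rfl
    calc ∑ i, (d i : ℂ) * (ρ i k).trace
        = LinearMap.trace ℂ _ (LinearMap.mulLeft ℂ (fun i => ρ i k)) :=
          (trace_mulLeft_pi d _).symm
      _ = LinearMap.trace ℂ _ (LinearMap.mulLeft ℂ (F (MonoidAlgebra.single k 1))) := by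
          rw [h1]
      _ = LinearMap.trace ℂ _ (LinearMap.mulLeft ℂ (MonoidAlgebra.single k (1:ℂ))) := by
          rw [hconj, LinearMap.trace_conj']
      _ = _ := trace_mulLeft_single k
  have hfour : ∀ i, (d i : ℂ) • ptrace (fourier (ρ i) Φ * fourier (ρ i) Ψ)
      = ∑ g : G, ∑ h : G, ((d i : ℂ) * (ρ i (g * h)).trace) • (Φ g * Ψ h) := by
    intro i
    rw [fourier, fourier, Finset.sum_mul_sum]
    simp only [← Matrix.mul_kronecker_mul, ← hmul]
    rw [ptrace_sum, Finset.smul_sum]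
    refine Finset.sum_congr rfl fun g _ => ?_
    rw [ptrace_sum, Finset.smul_sum]
    refine Finset.sum_congr rfl fun h _ => ?_
    rw [ptrace_kron, smul_smul]
  rw [Finset.sum_congr rfl fun i _ => hfour i]
  rw [Finset.sum_comm]
  have : ∀ g : G, ∑ i : I, ∑ h : G, ((d i : ℂ) * (ρ i (g * h)).trace) • (Φ g * Ψ h)
      = ∑ h : G, (if g * h = 1 then (Fintype.card G : ℂ) else 0) • (Φ g * Ψ h) := by
    intro g
    rw [Finset.sum_comm]
    refine Finset.sum_congr rfl fun h _ => ?_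
    rw [← Finset.sum_smul, key]
  rw [Finset.sum_congr rfl fun g _ => this g]
  rw [Finset.sum_comm]
  have h2 : ∀ h : G, ∑ g : G, (if g * h = 1 then (Fintype.card G : ℂ) else 0) • (Φ g * Ψ h)
      = (Fintype.card G : ℂ) • (Φ h⁻¹ * Ψ h) := by
    intro h
    rw [Finset.sum_eq_single h⁻¹]
    · simp
    · intro g _ hg
      rw [if_neg, zero_smul]
      intro hgh
      exact hg (eq_inv_of_mul_eq_one_left hgh)
    · simp
  rw [Finset.sum_congr rfl fun h _ => h2 h, ← Finset.smul_sum, smul_smul]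
  have hcard : (Fintype.card G : ℂ) ≠ 0 := by
    exact_mod_cast Fintype.card_ne_zero
  rw [one_div, inv_mul_cancel₀ hcard, one_smul]

end Stmt7
end

section
/- For all ℂ-linear maps Φ, Ψ : Matrix (Fin m) (Fin m) ℂ → Matrix (Fin n) (Fin n) ℂ, the matrix-unit Plancherel formula holds: ∑_{i,j ∈ Fin m} Φ(e_{ji}) * Ψ(e_{ij}) = tr₁(C_Φ * C_Ψ). -/
/-!
STATEMENT 8: Matrix-unit Plancherel formula: for all ℂ-linear maps
`Φ, Ψ : Matrix (Fin m) (Fin m) ℂ →ₗ[ℂ] Matrix (Fin n) (Fin n) ℂ`,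
`∑ i j, Φ(e_{ji}) * Ψ(e_{ij}) = tr₁(C_Φ * C_Ψ)`.
-/

namespace Stmt8

/-- The Choi matrix of a linear map `Φ`, with entries
`C_Φ ((i,a),(j,b)) = (Φ e_{ij}) a b`. -/
noncomputable def choi {m n : ℕ}
    (Φ : Matrix (Fin m) (Fin m) ℂ →ₗ[ℂ] Matrix (Fin n) (Fin n) ℂ) :
    Matrix (Fin m × Fin n) (Fin m × Fin n) ℂ :=
  Matrix.of fun p q => Φ (Matrix.single p.1 q.1 1) p.2 q.2

/-- Partial trace over the first tensor factor:
`(tr₁ M)(a,b) = ∑ x, M ((x,a),(x,b))`. -/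
noncomputable def ptrace {m n : ℕ} (M : Matrix (Fin m × Fin n) (Fin m × Fin n) ℂ) :
    Matrix (Fin n) (Fin n) ℂ :=
  Matrix.of fun a b => ∑ x : Fin m, M (x, a) (x, b)

theorem matrix_unit_plancherel {m n : ℕ}
    (Φ Ψ : Matrix (Fin m) (Fin m) ℂ →ₗ[ℂ] Matrix (Fin n) (Fin n) ℂ) :
    ∑ i : Fin m, ∑ j : Fin m,
        Φ (Matrix.single j i 1) * Ψ (Matrix.single i j 1) =
      ptrace (choi Φ * choi Ψ) := by
  ext a b
  simp only [ptrace, choi, Matrix.sum_apply, Matrix.mul_apply, Matrix.of_apply,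
    Fintype.sum_prod_type]
  rw [Finset.sum_comm]

end Stmt8
end

section
/- Let G be a finite group, Φ : G → Matrix (Fin n) (Fin n) ℂ a positive definite map, and ρ : G → Matrix (Fin d) (Fin d) ℂ any unitary matrix representation of G. Then the Fourier transform Φ̂(ρ) = ∑_{g ∈ G} ρ(g) ⊗ₖ Φ(g) is positive semidefinite. -/
/-!
STATEMENT 9: If `Φ : G → Matrix (Fin n) (Fin n) ℂ` is a positive definite map on a
finite group `G` and `ρ : G → Matrix (Fin d) (Fin d) ℂ` is a unitary matrix
representation of `G`, then the Fourier transform `Φ̂(ρ) = ∑ g, ρ g ⊗ₖ Φ g` is positive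
semidefinite.
-/

open scoped Kronecker Matrix ComplexOrder

namespace Stmt9

/-- `Φ : G → Matrix (Fin n) (Fin n) ℂ` is positive definite if the matrix with entries
`((g,a),(g',b)) ↦ (Φ (g⁻¹ * g')) a b` is positive semidefinite. -/
def IsPosDefMap {G : Type*} [Group G] [Fintype G] {n : ℕ}
    (Φ : G → Matrix (Fin n) (Fin n) ℂ) : Prop :=
  Matrix.PosSemidef (Matrix.of fun p q : G × Fin n => Φ (p.1⁻¹ * q.1) p.2 q.2)

theorem fourier_posSemidef_of_posDef
    {G : Type*} [Group G] [Fintype G] {n d : ℕ}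
    (Φ : G → Matrix (Fin n) (Fin n) ℂ) (hΦ : IsPosDefMap Φ)
    (ρ : G → Matrix (Fin d) (Fin d) ℂ)
    (hmul : ∀ g h : G, ρ (g * h) = ρ g * ρ h)
    (hone : ρ 1 = 1)
    (hstar : ∀ g : G, (ρ g)ᴴ = ρ g⁻¹) :
    Matrix.PosSemidef (∑ g : G, ρ g ⊗ₖ Φ g) := by
  classical
  set M : Matrix (G × Fin n) (G × Fin n) ℂ :=
    Matrix.of (fun p q : G × Fin n => Φ (p.1⁻¹ * q.1) p.2 q.2) with hM
  set B : Fin d → Matrix (G × Fin n) (Fin d × Fin n) ℂ :=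
    fun c => Matrix.of (fun p q => if p.2 = q.2 then ρ p.1 c q.1 else 0) with hB
  have hρ2 : ∀ (h k : G) (a b : Fin d),
      ∑ c : Fin d, (starRingEnd ℂ) (ρ h c a) * ρ k c b = ρ (h⁻¹ * k) a b := by
    intro h k a b
    rw [hmul, ← hstar]
    simp [Matrix.mul_apply, Matrix.conjTranspose_apply]
  have hsum : ∑ c : Fin d, (B c)ᴴ * M * (B c)
      = (Fintype.card G : ℂ) • ∑ g : G, ρ g ⊗ₖ Φ g := by
    ext ⟨a, i⟩ ⟨b, j⟩
    have lhs : ∀ c : Fin d, ((B c)ᴴ * M * (B c)) (a, i) (b, j)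
        = ∑ h : G, ∑ k : G, (starRingEnd ℂ) (ρ h c a) * Φ (h⁻¹ * k) i j * ρ k c b := by
      intro c
      simp only [Matrix.mul_apply, Matrix.conjTranspose_apply, hB, hM, Matrix.of_apply,
        Fintype.sum_prod_type, Finset.sum_mul, Finset.mul_sum]
      simp [apply_ite (starRingEnd ℂ), mul_comm, mul_assoc, mul_left_comm]
      rw [Finset.sum_comm]
    rw [Matrix.sum_apply]
    simp_rw [lhs]
    rw [Finset.sum_comm]
    calc ∑ h : G, ∑ c : Fin d, ∑ k : G,
            (starRingEnd ℂ) (ρ h c a) * Φ (h⁻¹ * k) i j * ρ k c b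
        = ∑ h : G, ∑ k : G, (∑ c : Fin d,
            (starRingEnd ℂ) (ρ h c a) * ρ k c b) * Φ (h⁻¹ * k) i j := by
          refine Finset.sum_congr rfl fun h _ => ?_
          rw [Finset.sum_comm]
          exact Finset.sum_congr rfl fun k _ => by rw [Finset.sum_mul]; exact Finset.sum_congr rfl fun c _ => by ring
      _ = ∑ h : G, ∑ k : G, ρ (h⁻¹ * k) a b * Φ (h⁻¹ * k) i j := by
          simp_rw [hρ2]
      _ = ∑ _h : G, ∑ g : G, ρ g a b * Φ g i j := by
          refine Finset.sum_congr rfl fun h _ => ?_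
          exact Fintype.sum_equiv (Equiv.mulLeft h⁻¹) _ _ (fun k => rfl)
      _ = (Fintype.card G : ℂ) • (∑ g : G, ρ g ⊗ₖ Φ g) (a, i) (b, j) := by
          simp [Finset.sum_const, Matrix.sum_apply, Matrix.kroneckerMap_apply, nsmul_eq_mul]
  have hcard : (0 : ℂ) < (Fintype.card G : ℂ) := by
    exact_mod_cast Fintype.card_pos
  have hPSD : Matrix.PosSemidef ((Fintype.card G : ℂ) • ∑ g : G, ρ g ⊗ₖ Φ g) := by
    rw [← hsum]
    refine Finset.sum_induction _ _ (fun A B' hA hB' => hA.add hB') Matrix.PosSemidef.zero ?_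
    intro c _
    exact hΦ.conjTranspose_mul_mul_same (B c)
  constructor
  · have h1 := hPSD.1
    rw [Matrix.IsHermitian, Matrix.conjTranspose_smul] at h1
    have hs : star (Fintype.card G : ℂ) = (Fintype.card G : ℂ) := by
      simp [Complex.star_def]
    rw [hs] at h1
    exact smul_right_injective _ hcard.ne' h1
  · intro x
    have h3 : (0:ℂ) ≤ (Fintype.card G : ℂ)⁻¹ := by
      rw [← Complex.ofReal_natCast, ← Complex.ofReal_inv, Complex.zero_le_real]
      positivity
    have h5 := hPSD.smul h3
    rw [smul_smul, inv_mul_cancel₀ hcard.ne', one_smul] at h5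
    exact h5.2 x


end Stmt9
end

section
/- (Bochner's theorem for matrix-valued maps on finite groups.) Let G be a finite group and (ρ_i)_{i ∈ I} a complete family of unitary matrix representations ρ_i : G → Matrix (Fin (d i)) (Fin (d i)) ℂ. Then a map Φ : G → Matrix (Fin n) (Fin n) ℂ is positive definite if and only if the Fourier transform Φ̂(ρ_i) is positive semidefinite for every i ∈ I. -/
/-!
STATEMENT 10: Bochner's theorem for matrix-valued maps on finite groups: for a complete
family `(ρ_i)_{i ∈ I}` of unitary matrix representations of a finite group `G`, a map
`Φ : G → Matrix (Fin n) (Fin n) ℂ` is positive definite if and only if `Φ̂(ρ_i)` is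
positive semidefinite for every `i ∈ I`.
-/

open scoped Kronecker Matrix ComplexOrder

namespace Stmt10

/-- The Fourier transform `Φ̂(ρ) = ∑ g, ρ g ⊗ₖ Φ g`. -/
noncomputable def fourier {G : Type*} [Fintype G] {d n : ℕ}
    (ρ : G → Matrix (Fin d) (Fin d) ℂ) (Φ : G → Matrix (Fin n) (Fin n) ℂ) :
    Matrix (Fin d × Fin n) (Fin d × Fin n) ℂ :=
  ∑ g : G, ρ g ⊗ₖ Φ g

/-- `Φ : G → Matrix (Fin n) (Fin n) ℂ` is positive definite if the matrix with entries
`((g,a),(g',b)) ↦ (Φ (g⁻¹ * g')) a b` is positive semidefinite. -/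
def IsPosDefMap {G : Type*} [Group G] [Fintype G] {n : ℕ}
    (Φ : G → Matrix (Fin n) (Fin n) ℂ) : Prop :=
  Matrix.PosSemidef (Matrix.of fun p q : G × Fin n => Φ (p.1⁻¹ * q.1) p.2 q.2)

open Classical in
lemma trace_mulLeft_monoidAlgebra {G : Type*} [Group G] [Fintype G] (u : G) :
    LinearMap.trace ℂ (MonoidAlgebra ℂ G) (LinearMap.mulLeft ℂ (MonoidAlgebra.of ℂ G u))
    = if u = 1 then (Fintype.card G : ℂ) else 0 := by
  classical
  let b : Module.Basis G ℂ (MonoidAlgebra ℂ G) := MonoidAlgebra.basis G ℂ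
  rw [LinearMap.trace_eq_matrix_trace ℂ b, Matrix.trace]
  have hdiag : ∀ g : G,
      (LinearMap.toMatrix b b (LinearMap.mulLeft ℂ (MonoidAlgebra.of ℂ G u))).diag g
      = if u = 1 then 1 else 0 := by
    intro g
    rw [Matrix.diag, LinearMap.toMatrix_apply, LinearMap.mulLeft_apply]
    have hb : b g = MonoidAlgebra.single g 1 := MonoidAlgebra.basis_apply ℂ g
    rw [hb]
    have h2 : (MonoidAlgebra.of ℂ G u) * MonoidAlgebra.single g (1:ℂ)
        = MonoidAlgebra.single (u * g) 1 := by
      simp [MonoidAlgebra.of_apply, MonoidAlgebra.single_mul_single]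
    rw [h2]
    have hrepr : b.repr (MonoidAlgebra.single (u*g) (1:ℂ)) g
        = (Finsupp.single (u*g) (1:ℂ) : G →₀ ℂ) g := rfl
    rw [hrepr, Finsupp.single_apply]
    simp [mul_eq_right]
  simp only [hdiag]
  by_cases hu : u = 1 <;> simp [hu, Finset.card_univ]

lemma stdBasis_repr {m m' : Type*} [Fintype m] [Fintype m'] (X : Matrix m m' ℂ) (p : m) (q : m') :
    (Matrix.stdBasis ℂ m m').repr X (p, q) = X p q := rfl

lemma trace_mulLeft_pi {I : Type*} [Fintype I] (d : I → ℕ)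
    (M : ∀ i, Matrix (Fin (d i)) (Fin (d i)) ℂ) :
    LinearMap.trace ℂ (∀ i, Matrix (Fin (d i)) (Fin (d i)) ℂ) (LinearMap.mulLeft ℂ M)
    = ∑ i, (d i : ℂ) * (M i).trace := by
  classical
  let b := Pi.basis (fun i => Matrix.stdBasis ℂ (Fin (d i)) (Fin (d i)))
  rw [LinearMap.trace_eq_matrix_trace ℂ b, Matrix.trace]
  have hdiag : ∀ j : Σ i, Fin (d i) × Fin (d i),
      (LinearMap.toMatrix b b (LinearMap.mulLeft ℂ M)).diag j = M j.1 j.2.1 j.2.1 := by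
    rintro ⟨i, p, q⟩
    rw [Matrix.diag, LinearMap.toMatrix_apply, LinearMap.mulLeft_apply]
    rw [Pi.basis_apply, Pi.basis_repr]
    simp only [Pi.mul_apply, Pi.single_eq_same]
    rw [stdBasis_repr, Matrix.stdBasis_eq_single]
    simp [Matrix.mul_apply, Matrix.single]
  simp only [hdiag]
  rw [← Finset.univ_sigma_univ, Finset.sum_sigma]
  refine Finset.sum_congr rfl fun i _ => ?_
  rw [Fintype.sum_prod_type]
  simp [Finset.sum_const, Matrix.trace, Matrix.diag, Finset.mul_sum]

open Classical in
lemma sum_dim_mul_trace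
    {G : Type*} [Group G] [Fintype G] {I : Type*} [Fintype I]
    (d : I → ℕ) (ρ : ∀ i, G → Matrix (Fin (d i)) (Fin (d i)) ℂ)
    (hmul : ∀ i (g h : G), ρ i (g * h) = ρ i g * ρ i h)
    (hone : ∀ i, ρ i 1 = 1)
    (hcomplete : Function.Bijective
      ((MonoidAlgebra.lift ℂ (∀ i, Matrix (Fin (d i)) (Fin (d i)) ℂ) G)
        { toFun := fun g i => ρ i g
          map_one' := funext fun i => hone i
          map_mul' := fun g h => funext fun i => hmul i g h }))
    (u : G) :
    ∑ i, (d i : ℂ) * (ρ i u).trace = if u = 1 then (Fintype.card G : ℂ) else 0 := by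
  set F := ((MonoidAlgebra.lift ℂ (∀ i, Matrix (Fin (d i)) (Fin (d i)) ℂ) G)
        { toFun := fun g i => ρ i g
          map_one' := funext fun i => hone i
          map_mul' := fun g h => funext fun i => hmul i g h }) with hF
  let T : MonoidAlgebra ℂ G ≃ₐ[ℂ] (∀ i, Matrix (Fin (d i)) (Fin (d i)) ℂ) :=
    AlgEquiv.ofBijective F hcomplete
  have hT : ∀ x, T x = F x := fun x => rfl
  have hconj : ∀ x : MonoidAlgebra ℂ G,
      LinearMap.mulLeft ℂ (T x) = (T.toLinearEquiv).conj (LinearMap.mulLeft ℂ x) := by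
    intro x
    apply LinearMap.ext; intro y
    simp only [LinearEquiv.conj_apply, LinearMap.mulLeft_apply, LinearMap.coe_comp,
      Function.comp_apply, LinearEquiv.coe_coe, AlgEquiv.toLinearEquiv_apply,
      AlgEquiv.toLinearEquiv_symm]
    rw [map_mul]
    congr 1
    exact (T.apply_symm_apply y).symm
  have hTof : T (MonoidAlgebra.of ℂ G u) = fun i => ρ i u := by
    rw [hT, hF, MonoidAlgebra.lift_of]
    rfl
  have := trace_mulLeft_pi d (fun i => ρ i u)
  rw [← hTof, hconj, LinearMap.trace_conj', trace_mulLeft_monoidAlgebra] at this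
  rw [← this]

lemma fourier_apply {G : Type*} [Fintype G] {d n : ℕ}
    (ρ : G → Matrix (Fin d) (Fin d) ℂ) (Φ : G → Matrix (Fin n) (Fin n) ℂ)
    (a b : Fin d) (p q : Fin n) :
    fourier ρ Φ (a, p) (b, q) = ∑ g : G, ρ g a b * Φ g p q := by
  simp [fourier, Matrix.sum_apply]

lemma posSemidef_smul_real {m : Type*} [Fintype m] {M : Matrix m m ℂ}
    (hM : M.PosSemidef) {c : ℝ} (hc : 0 ≤ c) : ((c : ℂ) • M).PosSemidef := by
  exact hM.smul (by exact_mod_cast hc : (0:ℂ) ≤ (c:ℂ))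

lemma posSemidef_sum {m : Type*} [Fintype m] {ι : Type*} [Fintype ι]
    (f : ι → Matrix m m ℂ) (h : ∀ i, (f i).PosSemidef) : (∑ i, f i).PosSemidef := by
  exact Matrix.posSemidef_sum Finset.univ fun i _ => h i

open scoped MatrixOrder in
lemma posSemidef_iff_eq_transpose_mul_self' {m : Type*} [Fintype m] [DecidableEq m]
    {A : Matrix m m ℂ} (hA : A.PosSemidef) : ∃ B : Matrix m m ℂ, A = Bᴴ * B := by
  obtain ⟨B, rfl⟩ := CStarAlgebra.nonneg_iff_eq_star_mul_self.mp hA.nonneg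
  exact ⟨B, rfl⟩

section Forward

variable {G : Type*} [Group G] [Fintype G] {dd n : ℕ}

lemma forward (ρ : G → Matrix (Fin dd) (Fin dd) ℂ)
    (hmul : ∀ g h : G, ρ (g * h) = ρ g * ρ h)
    (hstar : ∀ g : G, (ρ g)ᴴ = ρ g⁻¹)
    {Φ : G → Matrix (Fin n) (Fin n) ℂ} (hΦ : IsPosDefMap Φ) :
    (fourier ρ Φ).PosSemidef := by
  classical
  obtain ⟨B, hB⟩ := posSemidef_iff_eq_transpose_mul_self' hΦ
  have hBe : ∀ (g h : G) (p q : Fin n),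
      Φ (g⁻¹ * h) p q = ∑ r : G × Fin n, (starRingEnd ℂ) (B r (g, p)) * B r (h, q) := by
    intro g h p q
    have := congrFun (congrFun hB (g, p)) (h, q)
    simpa [Matrix.mul_apply, Matrix.conjTranspose_apply] using this
  have hrep : ∀ (h k : G) (a b : Fin dd),
      ρ (h⁻¹ * k) a b = ∑ c : Fin dd, (starRingEnd ℂ) (ρ h c a) * ρ k c b := by
    intro h k a b
    rw [hmul, ← hstar]
    simp [Matrix.mul_apply, Matrix.conjTranspose_apply]
  set C : Matrix (Fin dd × (G × Fin n)) (Fin dd × Fin n) ℂ :=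
    Matrix.of (fun cr bq => ∑ k : G, ρ k cr.1 bq.1 * B cr.2 (k, bq.2)) with hC
  have hG : (Fintype.card G : ℂ) ≠ 0 := Nat.cast_ne_zero.mpr Fintype.card_ne_zero
  have key : fourier ρ Φ = (((Fintype.card G : ℝ)⁻¹ : ℝ) : ℂ) • (Cᴴ * C) := by
    ext ⟨a, p⟩ ⟨b, q⟩
    have main : ∑ x : Fin dd × (G × Fin n), (starRingEnd ℂ) (C x (a, p)) * C x (b, q)
        = (Fintype.card G : ℂ) * (fourier ρ Φ (a, p) (b, q)) := by
      have step1 : ∀ x : Fin dd × (G × Fin n),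
          (starRingEnd ℂ) (C x (a, p)) * C x (b, q)
          = ∑ hk : G × G, ((starRingEnd ℂ) (ρ hk.1 x.1 a) * ρ hk.2 x.1 b) *
              ((starRingEnd ℂ) (B x.2 (hk.1, p)) * B x.2 (hk.2, q)) := by
        intro x
        rw [hC]
        simp only [Matrix.of_apply, map_sum, Finset.sum_mul_sum, ← Fintype.sum_prod_type']
        refine Finset.sum_congr rfl fun hk _ => ?_
        rw [map_mul]
        ring
      calc ∑ x : Fin dd × (G × Fin n), (starRingEnd ℂ) (C x (a, p)) * C x (b, q)
          = ∑ x : Fin dd × (G × Fin n), ∑ hk : G × G,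
              ((starRingEnd ℂ) (ρ hk.1 x.1 a) * ρ hk.2 x.1 b) *
              ((starRingEnd ℂ) (B x.2 (hk.1, p)) * B x.2 (hk.2, q)) :=
            Finset.sum_congr rfl fun x _ => step1 x
        _ = ∑ hk : G × G, ∑ x : Fin dd × (G × Fin n),
              ((starRingEnd ℂ) (ρ hk.1 x.1 a) * ρ hk.2 x.1 b) *
              ((starRingEnd ℂ) (B x.2 (hk.1, p)) * B x.2 (hk.2, q)) := Finset.sum_comm
        _ = ∑ hk : G × G, ρ (hk.1⁻¹ * hk.2) a b * Φ (hk.1⁻¹ * hk.2) p q := by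
            refine Finset.sum_congr rfl fun hk _ => ?_
            rw [Fintype.sum_prod_type, hrep, hBe, Finset.sum_mul_sum]
        _ = ∑ h : G, ∑ k : G, ρ (h⁻¹ * k) a b * Φ (h⁻¹ * k) p q :=
            Fintype.sum_prod_type _
        _ = ∑ _h : G, ∑ g : G, ρ g a b * Φ g p q := by
            refine Finset.sum_congr rfl fun h _ => ?_
            rw [← Equiv.sum_comp (Equiv.mulLeft h) (fun k => ρ (h⁻¹ * k) a b * Φ (h⁻¹ * k) p q)]
            simp [inv_mul_cancel_left]
        _ = (Fintype.card G : ℂ) * (fourier ρ Φ (a, p) (b, q)) := by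
            rw [Finset.sum_const, fourier_apply, Finset.card_univ, nsmul_eq_mul]
    have : (Cᴴ * C) (a, p) (b, q)
        = ∑ x : Fin dd × (G × Fin n), (starRingEnd ℂ) (C x (a, p)) * C x (b, q) := by
      simp [Matrix.mul_apply, Matrix.conjTranspose_apply]
    rw [Matrix.smul_apply, this, main, smul_eq_mul]
    push_cast
    rw [← mul_assoc, inv_mul_cancel₀ hG, one_mul]
  rw [key]
  exact posSemidef_smul_real (Matrix.posSemidef_conjTranspose_mul_self C)
    (inv_nonneg.mpr (Nat.cast_nonneg _))

end Forward

open Classical in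
lemma backward {G : Type*} [Group G] [Fintype G] {I : Type*} [Fintype I]
    (d : I → ℕ) (ρ : ∀ i, G → Matrix (Fin (d i)) (Fin (d i)) ℂ)
    (hmul : ∀ i (g h : G), ρ i (g * h) = ρ i g * ρ i h)
    (hstar : ∀ i (g : G), (ρ i g)ᴴ = ρ i g⁻¹)
    (hdelta : ∀ u : G, ∑ i, (d i : ℂ) * (ρ i u).trace
      = if u = 1 then (Fintype.card G : ℂ) else 0)
    {n : ℕ} {Φ : G → Matrix (Fin n) (Fin n) ℂ}
    (hF : ∀ i, (fourier (ρ i) Φ).PosSemidef) : IsPosDefMap Φ := by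
  classical
  choose B hB using fun i => posSemidef_iff_eq_transpose_mul_self' (hF i)
  have hBe : ∀ i (a b : Fin (d i)) (p q : Fin n),
      ∑ r : Fin (d i) × Fin n, (starRingEnd ℂ) (B i r (a, p)) * B i r (b, q)
      = ∑ s : G, ρ i s a b * Φ s p q := by
    intro i a b p q
    have h1 := congrFun (congrFun (hB i) (a, p)) (b, q)
    rw [fourier_apply] at h1
    calc ∑ r : Fin (d i) × Fin n, (starRingEnd ℂ) (B i r (a, p)) * B i r (b, q)
        = ((B i)ᴴ * B i) (a, p) (b, q) := by
          simp [Matrix.mul_apply, Matrix.conjTranspose_apply]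
      _ = ∑ s : G, ρ i s a b * Φ s p q := h1.symm
  have hrep2 : ∀ i (g h : G) (a b : Fin (d i)),
      ∑ c : Fin (d i), ρ i g c a * (starRingEnd ℂ) (ρ i h c b) = ρ i (h⁻¹ * g) b a := by
    intro i g h a b
    rw [hmul, ← hstar]
    simp [Matrix.mul_apply, Matrix.conjTranspose_apply, mul_comm]
  set D : ∀ i, Matrix (G × Fin n) (Fin (d i) × (Fin (d i) × Fin n)) ℂ :=
    fun i => Matrix.of (fun gp cr =>
      ∑ a : Fin (d i), ρ i gp.1 cr.1 a * (starRingEnd ℂ) (B i cr.2 (a, gp.2))) with hD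
  have hG : (Fintype.card G : ℂ) ≠ 0 := Nat.cast_ne_zero.mpr Fintype.card_ne_zero
  have key : (Matrix.of fun p q : G × Fin n => Φ (p.1⁻¹ * q.1) p.2 q.2)
      = (((Fintype.card G : ℝ)⁻¹ : ℝ) : ℂ) •
          ∑ i, (((d i : ℝ)) : ℂ) • (D i * (D i)ᴴ) := by
    ext ⟨g, p⟩ ⟨h, q⟩
    have inner : ∀ i, ∑ x : Fin (d i) × (Fin (d i) × Fin n),
        D i (g, p) x * (starRingEnd ℂ) (D i (h, q) x)
        = ∑ s : G, Φ s p q * (ρ i (h⁻¹ * g * s)).trace := by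
      intro i
      have step1 : ∀ x : Fin (d i) × (Fin (d i) × Fin n),
          D i (g, p) x * (starRingEnd ℂ) (D i (h, q) x)
          = ∑ ab : Fin (d i) × Fin (d i),
              (ρ i g x.1 ab.1 * (starRingEnd ℂ) (ρ i h x.1 ab.2)) *
              ((starRingEnd ℂ) (B i x.2 (ab.1, p)) * B i x.2 (ab.2, q)) := by
        intro x
        rw [hD]
        simp only [Matrix.of_apply, map_sum, map_mul, Complex.conj_conj,
          Finset.sum_mul_sum, ← Fintype.sum_prod_type']
        refine Finset.sum_congr rfl fun ab _ => by ring
      calc ∑ x : Fin (d i) × (Fin (d i) × Fin n),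
            D i (g, p) x * (starRingEnd ℂ) (D i (h, q) x)
          = ∑ x : Fin (d i) × (Fin (d i) × Fin n), ∑ ab : Fin (d i) × Fin (d i),
              (ρ i g x.1 ab.1 * (starRingEnd ℂ) (ρ i h x.1 ab.2)) *
              ((starRingEnd ℂ) (B i x.2 (ab.1, p)) * B i x.2 (ab.2, q)) :=
            Finset.sum_congr rfl fun x _ => step1 x
        _ = ∑ ab : Fin (d i) × Fin (d i), ∑ x : Fin (d i) × (Fin (d i) × Fin n),
              (ρ i g x.1 ab.1 * (starRingEnd ℂ) (ρ i h x.1 ab.2)) *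
              ((starRingEnd ℂ) (B i x.2 (ab.1, p)) * B i x.2 (ab.2, q)) := Finset.sum_comm
        _ = ∑ ab : Fin (d i) × Fin (d i),
              ρ i (h⁻¹ * g) ab.2 ab.1 * ∑ s : G, ρ i s ab.1 ab.2 * Φ s p q := by
            refine Finset.sum_congr rfl fun ab _ => ?_
            rw [← hrep2, ← hBe, Finset.sum_mul_sum, Fintype.sum_prod_type]
        _ = ∑ s : G, Φ s p q *
              ∑ ab : Fin (d i) × Fin (d i), ρ i (h⁻¹ * g) ab.2 ab.1 * ρ i s ab.1 ab.2 := by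
            simp only [Finset.mul_sum]
            rw [Finset.sum_comm]
            refine Finset.sum_congr rfl fun s _ =>
              Finset.sum_congr rfl fun ab _ => by ring
        _ = ∑ s : G, Φ s p q * (ρ i (h⁻¹ * g * s)).trace := by
            refine Finset.sum_congr rfl fun s _ => ?_
            congr 1
            rw [hmul i (h⁻¹ * g) s, Matrix.trace, Fintype.sum_prod_type]
            simp only [Matrix.diag_apply, Matrix.mul_apply]
            exact Finset.sum_comm
    have main : ∑ i, ((d i : ℝ) : ℂ) *
        (∑ x : Fin (d i) × (Fin (d i) × Fin n),
          D i (g, p) x * (starRingEnd ℂ) (D i (h, q) x))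
        = (Fintype.card G : ℂ) * Φ (g⁻¹ * h) p q := by
      calc ∑ i, ((d i : ℝ) : ℂ) *
            (∑ x : Fin (d i) × (Fin (d i) × Fin n),
              D i (g, p) x * (starRingEnd ℂ) (D i (h, q) x))
          = ∑ i, ∑ s : G, Φ s p q * ((d i : ℂ) * (ρ i (h⁻¹ * g * s)).trace) := by
            refine Finset.sum_congr rfl fun i _ => ?_
            rw [inner i, Finset.mul_sum]
            push_cast
            refine Finset.sum_congr rfl fun s _ => by ring
        _ = ∑ s : G, Φ s p q * ∑ i, (d i : ℂ) * (ρ i (h⁻¹ * g * s)).trace := by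
            rw [Finset.sum_comm]
            refine Finset.sum_congr rfl fun s _ => by rw [Finset.mul_sum]
        _ = ∑ s : G, Φ s p q * (if s = g⁻¹ * h then (Fintype.card G : ℂ) else 0) := by
            refine Finset.sum_congr rfl fun s _ => ?_
            rw [hdelta]
            by_cases hs : s = g⁻¹ * h
            · subst hs
              rw [if_pos (by group), if_pos rfl]
            · rw [if_neg, if_neg hs]
              intro hcon
              exact hs (by simpa [mul_inv_rev, inv_inv] using eq_inv_of_mul_eq_one_right hcon)
        _ = (Fintype.card G : ℂ) * Φ (g⁻¹ * h) p q := by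
            simp only [mul_ite, mul_zero]
            rw [Finset.sum_ite_eq' Finset.univ (g⁻¹ * h)]
            simp [mul_comm]
    have expand : ((((Fintype.card G : ℝ)⁻¹ : ℝ) : ℂ) •
          ∑ i, (((d i : ℝ)) : ℂ) • (D i * (D i)ᴴ)) (g, p) (h, q)
        = (((Fintype.card G : ℝ)⁻¹ : ℝ) : ℂ) *
          ∑ i, ((d i : ℝ) : ℂ) *
            (∑ x : Fin (d i) × (Fin (d i) × Fin n),
              D i (g, p) x * (starRingEnd ℂ) (D i (h, q) x)) := by
      simp [Matrix.smul_apply, Matrix.sum_apply, Matrix.mul_apply,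
        Matrix.conjTranspose_apply, smul_eq_mul, Complex.star_def]
    rw [Matrix.of_apply, expand, main]
    push_cast
    rw [← mul_assoc, inv_mul_cancel₀ hG, one_mul]
  rw [IsPosDefMap, key]
  refine posSemidef_smul_real (posSemidef_sum _ fun i => ?_) (inv_nonneg.mpr (Nat.cast_nonneg _))
  exact posSemidef_smul_real (Matrix.posSemidef_self_mul_conjTranspose (D i)) (Nat.cast_nonneg _)

theorem bochner
    {G : Type*} [Group G] [Fintype G] {I : Type*} [Fintype I]
    (d : I → ℕ) (ρ : ∀ i, G → Matrix (Fin (d i)) (Fin (d i)) ℂ)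
    (hmul : ∀ i (g h : G), ρ i (g * h) = ρ i g * ρ i h)
    (hone : ∀ i, ρ i 1 = 1)
    (hstar : ∀ i (g : G), (ρ i g)ᴴ = ρ i g⁻¹)
    (hcomplete : Function.Bijective
      ((MonoidAlgebra.lift ℂ (∀ i, Matrix (Fin (d i)) (Fin (d i)) ℂ) G)
        { toFun := fun g i => ρ i g
          map_one' := funext fun i => hone i
          map_mul' := fun g h => funext fun i => hmul i g h }))
    {n : ℕ} (Φ : G → Matrix (Fin n) (Fin n) ℂ) :
    IsPosDefMap Φ ↔ ∀ i : I, Matrix.PosSemidef (fourier (ρ i) Φ) := by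
  have hdelta := sum_dim_mul_trace d ρ hmul hone hcomplete
  constructor
  · intro hΦ i
    exact forward (ρ i) (hmul i) (hstar i) hΦ
  · intro h
    exact backward d ρ hmul hstar hdelta h

end Stmt10
end

section
/- (Bochner's theorem reduces to Choi's theorem on matrix algebras.) For a ℂ-linear map Φ : Matrix (Fin m) (Fin m) ℂ → Matrix (Fin n) (Fin n) ℂ, the following are equivalent: (a) Φ is positive definite, i.e. the matrix indexed by (Fin m × Fin m) × Fin n with entries (((i,j),a),((k,l),b)) ↦ (Φ (e_{ji} * e_{kl})) a b is positive semidefinite; (b) the Choi matrix C_Φ is positive semidefinite. -/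
/-!
STATEMENT 11: Bochner's theorem reduces to Choi's theorem on matrix algebras: a ℂ-linear
map `Φ : Matrix (Fin m) (Fin m) ℂ → Matrix (Fin n) (Fin n) ℂ` is positive definite (the
matrix with entries `(((i,j),a),((k,l),b)) ↦ (Φ (e_{ji} * e_{kl})) a b` is positive
semidefinite) if and only if its Choi matrix `C_Φ` is positive semidefinite.
-/

open scoped Matrix ComplexOrder

namespace Stmt11

/-- The Choi matrix of a linear map `Φ`, with entries
`C_Φ ((i,a),(j,b)) = (Φ e_{ij}) a b`. -/
noncomputable def choi {m n : ℕ}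
    (Φ : Matrix (Fin m) (Fin m) ℂ →ₗ[ℂ] Matrix (Fin n) (Fin n) ℂ) :
    Matrix (Fin m × Fin n) (Fin m × Fin n) ℂ :=
  Matrix.of fun p q => Φ (Matrix.single p.1 q.1 1) p.2 q.2

theorem posDef_iff_choi_posSemidef {m n : ℕ}
    (Φ : Matrix (Fin m) (Fin m) ℂ →ₗ[ℂ] Matrix (Fin n) (Fin n) ℂ) :
    Matrix.PosSemidef (Matrix.of fun p q : (Fin m × Fin m) × Fin n =>
        Φ (Matrix.single p.1.2 p.1.1 1 * Matrix.single q.1.1 q.1.2 1)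
          p.2 q.2) ↔
      Matrix.PosSemidef (choi Φ) := by
  set B : Matrix ((Fin m × Fin m) × Fin n) ((Fin m × Fin m) × Fin n) ℂ :=
    Matrix.of fun p q =>
      Φ (Matrix.single p.1.2 p.1.1 1 * Matrix.single q.1.1 q.1.2 1)
        p.2 q.2 with hB
  have hBentry : ∀ p q : (Fin m × Fin m) × Fin n,
      B p q = if p.1.1 = q.1.1 then choi Φ (p.1.2, p.2) (q.1.2, q.2) else 0 := by
    rintro ⟨⟨i, j⟩, a⟩ ⟨⟨k, l⟩, b⟩
    by_cases h : i = k
    · subst h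
      simp [hB, choi, Matrix.single_mul_single_same]
    · simp [hB, Matrix.single_mul_single_of_ne (c := (1 : ℂ)) j i k h 1, h]
  constructor
  · intro hBpsd
    rcases Nat.eq_zero_or_pos m with hm | hm
    · subst hm
      have : choi Φ = 0 := by
        ext ⟨i, a⟩ q
        exact absurd i.2 (by omega)
      rw [this]; exact Matrix.PosSemidef.zero
    · have : NeZero m := ⟨by omega⟩
      have := hBpsd.submatrix (fun p : Fin m × Fin n => ((0, p.1), p.2))
      convert this using 1
      ext ⟨j, a⟩ ⟨l, b⟩
      simp [Matrix.submatrix_apply, hBentry, choi]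
  · intro hC
    refine Matrix.PosSemidef.of_dotProduct_mulVec_nonneg ?_ ?_
    · ext p q
      have h1 := hBentry p q
      have h2 := hBentry q p
      rw [Matrix.conjTranspose_apply, h1, h2]
      have hherm := congrFun (congrFun hC.1 (p.1.2, p.2)) (q.1.2, q.2)
      rw [Matrix.conjTranspose_apply] at hherm
      by_cases h : p.1.1 = q.1.1
      · rw [if_pos h.symm, if_pos h]
        exact hherm
      · simp [h, Ne.symm h]
    · intro x
      set y : Fin m → (Fin m × Fin n → ℂ) :=
        fun i p => x ((i, p.1), p.2) with hy
      have hmv : ∀ p : (Fin m × Fin m) × Fin n,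
          (B *ᵥ x) p = ∑ v : Fin m × Fin n,
            choi Φ (p.1.2, p.2) v * x ((p.1.1, v.1), v.2) := by
        intro p
        show ∑ q, B p q * x q = _
        rw [← Fintype.sum_equiv ((Equiv.prodAssoc (Fin m) (Fin m) (Fin n)).symm)
          (fun r : Fin m × (Fin m × Fin n) =>
            B p ((r.1, r.2.1), r.2.2) * x ((r.1, r.2.1), r.2.2)) _ (fun r => rfl)]
        rw [Fintype.sum_prod_type]
        rw [Finset.sum_eq_single p.1.1]
        · refine Finset.sum_congr rfl fun v _ => ?_
          rw [hBentry]; simp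
        · intro k _ hk
          apply Finset.sum_eq_zero; intro v _
          rw [hBentry]; simp [Ne.symm hk]
        · intro h; exact absurd (Finset.mem_univ _) h
      have key : (star x) ⬝ᵥ B *ᵥ x =
          ∑ i : Fin m, (star (y i)) ⬝ᵥ (choi Φ) *ᵥ (y i) := by
        show ∑ p, star (x p) * (B *ᵥ x) p = _
        rw [← Fintype.sum_equiv ((Equiv.prodAssoc (Fin m) (Fin m) (Fin n)).symm)
          (fun r : Fin m × (Fin m × Fin n) =>
            star (x ((r.1, r.2.1), r.2.2)) * (B *ᵥ x) ((r.1, r.2.1), r.2.2)) _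
          (fun r => rfl)]
        rw [Fintype.sum_prod_type]
        refine Finset.sum_congr rfl fun i _ => ?_
        refine Finset.sum_congr rfl fun u _ => ?_
        rw [hmv]
        rfl
      rw [key]
      exact Finset.sum_nonneg fun i _ => hC.dotProduct_mulVec_nonneg _

end Stmt11
end
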